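/- Let D be a distributive upper semilattice with least element 0 and greatest element 1, and let d₀, …, dₙ, x ∈ D. Then x is an upper bound of the set {y ∈ D : y ≤ dᵢ for all i ≤ n} if and only if x is the greatest lower bound of the finite set {x ⊔ dᵢ : i ≤ n}. -/

import Mathlib

lemma aux_decomp {D : Type*} [SemilatticeSup D]
    (hdist : ∀ x a b : D, x ≤ a ⊔ b → ∃ a₀ b₀ : D, a₀ ≤ a ∧ b₀ ≤ b ∧ x = a₀ ⊔ b₀)
    {ι : Type*} [DecidableEq ι] (d : ι → D) (x : D) (s : Finset ι) :
    ∀ y : D, (∀ i ∈ s, y ≤ x ⊔ d i) →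
      ∃ b : D, b ≤ y ∧ (∀ i ∈ s, b ≤ d i) ∧ y ≤ x ⊔ b := by
  induction s using Finset.induction_on with
  | empty => exact fun y _ => ⟨y, le_rfl, by simp, le_sup_right⟩
  | insert _ _ hnotmem ih =>
    rename_i i s
    intro y hy
    obtain ⟨a, b, ha, hb, hy'⟩ := hdist y x (d i) (hy i (Finset.mem_insert_self i s))
    obtain ⟨c, hcb, hcd, hbc⟩ := ih b (fun j hj =>
      le_trans (hy' ▸ le_sup_right) (hy j (Finset.mem_insert_of_mem hj)))
    refine ⟨c, le_trans hcb (hy' ▸ le_sup_right), ?_, ?_⟩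
    · intro j hj
      rcases Finset.mem_insert.mp hj with rfl | hj
      · exact le_trans hcb hb
      · exact hcd j hj
    · calc y = a ⊔ b := hy'
        _ ≤ x ⊔ (x ⊔ c) := sup_le_sup ha hbc
        _ ≤ x ⊔ c := by simp

/-- In a distributive upper semilattice `D` with least element `⊥` and
greatest element `⊤`, `x` is an upper bound of `{y | ∀ i, y ≤ d i}` if and only if
`x` is the greatest lower bound of the finite set `{x ⊔ d i : i ≤ n}`. -/
theorem stmt2 {D : Type*} [SemilatticeSup D] [OrderBot D] [OrderTop D]
    (hdist : ∀ x a b : D, x ≤ a ⊔ b → ∃ a₀ b₀ : D, a₀ ≤ a ∧ b₀ ≤ b ∧ x = a₀ ⊔ b₀)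
    (n : ℕ) (d : Fin (n + 1) → D) (x : D) :
    (∀ y : D, (∀ i : Fin (n + 1), y ≤ d i) → y ≤ x) ↔
      IsGLB (Set.range fun i : Fin (n + 1) => x ⊔ d i) x := by
  constructor
  · intro h
    constructor
    · rintro z ⟨i, rfl⟩; exact le_sup_left
    · intro y hy
      obtain ⟨b, _, hbd, hyb⟩ := aux_decomp hdist d x Finset.univ y
        (fun i _ => hy ⟨i, rfl⟩)
      have : b ≤ x := h b (fun i => hbd i (Finset.mem_univ i))
      exact le_trans hyb (sup_le le_rfl this)
  · intro h y hy
    exact h.2 (by rintro z ⟨i, rfl⟩; exact le_trans (hy i) le_sup_right)
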